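/- Let G be a finite simple graph and let ≼ be a linear order on V(G) such that if u ≺ v ≺ w and uw ∈ E(G), then uv ∈ E(G). For a vertex v, let d_v be its out-degree (number of neighbours w with v ≺ w). Then the number of 4-tuples (x, v, y, w) with x ≺ v ≺ y ≺ w, xy ∈ E(G), and vw ∈ E(G) is at most (1/2)·(ω(G)−2)·Σ_{v∈V(G)} d_v(d_v − 1), where ω(G) is the clique number of G. -/

import Mathlib

open Finset

/-- Let `≼` be a linear order on the vertices of `G` such that `u ≺ v ≺ w` and
`uw ∈ E(G)` imply `uv ∈ E(G)` (an interval-graph ordering).  With `d_v` the out-degree of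
`v`, the number of 4-tuples `(x, v, y, w)` with `x ≺ v ≺ y ≺ w`, `xy ∈ E(G)` and
`vw ∈ E(G)` is at most `(1/2)·(ω(G) − 2)·Σ_v d_v(d_v − 1)` (stated multiplied by 2). -/
theorem stmt_9 {V : Type*} [Fintype V] [LinearOrder V] (G : SimpleGraph V)
    [DecidableRel G.Adj]
    (hinterval : ∀ u v w : V, u < v → v < w → G.Adj u w → G.Adj u v) :
    2 * (Finset.univ.filter (fun t : V × V × V × V =>
          t.1 < t.2.1 ∧ t.2.1 < t.2.2.1 ∧ t.2.2.1 < t.2.2.2 ∧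
          G.Adj t.1 t.2.2.1 ∧ G.Adj t.2.1 t.2.2.2)).card ≤
      (G.cliqueNum - 2) *
        ∑ v : V, (Finset.univ.filter (fun w => v < w ∧ G.Adj v w)).card *
          ((Finset.univ.filter (fun w => v < w ∧ G.Adj v w)).card - 1) := by
  classical
  set N : V → Finset V := fun v => Finset.univ.filter (fun w => v < w ∧ G.Adj v w) with hN
  set T : Finset (V × V × V × V) := Finset.univ.filter (fun t : V × V × V × V =>
          t.1 < t.2.1 ∧ t.2.1 < t.2.2.1 ∧ t.2.2.1 < t.2.2.2 ∧
          G.Adj t.1 t.2.2.1 ∧ G.Adj t.2.1 t.2.2.2) with hT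
  set P : Finset (V × V × V) := Finset.univ.filter
    (fun p : V × V × V => p.1 < p.2.1 ∧ p.2.1 < p.2.2 ∧ G.Adj p.1 p.2.1 ∧ G.Adj p.1 p.2.2)
    with hP
  -- every tuple's tail lies in P
  have hmem : ∀ t ∈ T, t.2 ∈ P := by
    intro t ht
    simp only [hT, Finset.mem_filter] at ht
    obtain ⟨-, h1, h2, h3, h4, h5⟩ := ht
    exact Finset.mem_filter.2 ⟨Finset.mem_univ _, h2, h3, hinterval _ _ _ h2 h3 h5, h5⟩
  have hcardT : T.card = ∑ p ∈ P, (T.filter (fun t => t.2 = p)).card :=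
    Finset.card_eq_sum_card_fiberwise hmem
  -- each fiber has size at most ω - 2
  have hfib : ∀ p ∈ P, (T.filter (fun t => t.2 = p)).card ≤ G.cliqueNum - 2 := by
    rintro ⟨v, y, w⟩ hp
    simp only [hP, Finset.mem_filter] at hp
    obtain ⟨-, hvy, hyw, havy, havw⟩ := hp
    set S : Finset V := Finset.univ.filter (fun x => x < v ∧ G.Adj x y) with hS
    have hSmem : ∀ x, x ∈ S ↔ x < v ∧ G.Adj x y := by
      intro x; simp [hS]
    have h1 : (T.filter (fun t => t.2 = (v, y, w))).card ≤ S.card := by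
      apply Finset.card_le_card_of_injOn (fun t => t.1)
      · intro t ht
        simp only [hT, Finset.mem_coe, Finset.mem_filter] at ht
        obtain ⟨⟨-, a1, a2, a3, a4, a5⟩, heq⟩ := ht
        rw [heq] at a1 a4
        exact (hSmem _).2 ⟨a1, a4⟩
      · intro a ha b hb hab
        simp only [Finset.coe_filter, Set.mem_setOf_eq] at ha hb
        have : a.2 = b.2 := ha.2.trans hb.2.symm
        exact Prod.ext hab this
    -- build the clique
    have hyS : y ∉ S := by
      rw [hSmem]; rintro ⟨h, -⟩; exact absurd (h.trans hvy) (lt_irrefl _)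
    have hvS : v ∉ insert y S := by
      simp only [Finset.mem_insert, hSmem]
      rintro (h | ⟨h, -⟩)
      · exact absurd hvy (h ▸ lt_irrefl _)
      · exact absurd h (lt_irrefl _)
    have hclique : G.IsClique (insert v (insert y S) : Finset V) := by
      intro a ha b hb hne
      simp only [Finset.coe_insert, Set.mem_insert_iff, Finset.mem_coe, hSmem] at ha hb
      have key : ∀ x, x < v ∧ G.Adj x y → G.Adj x v := fun x hx =>
        hinterval _ _ _ hx.1 hvy hx.2
      rcases ha with rfl | rfl | ha <;> rcases hb with rfl | rfl | hb
      · exact absurd rfl hne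
      · exact havy
      · exact (key _ hb).symm
      · exact havy.symm
      · exact absurd rfl hne
      · exact hb.2.symm
      · exact key _ ha
      · exact ha.2
      · rcases lt_trichotomy a b with h | h | h
        · exact hinterval _ _ _ h (hb.1.trans hvy) ha.2
        · exact absurd h hne
        · exact (hinterval _ _ _ h (ha.1.trans hvy) hb.2).symm
    have hcardC : (insert v (insert y S)).card = S.card + 2 := by
      rw [Finset.card_insert_of_notMem hvS, Finset.card_insert_of_notMem hyS]
    have h2 : S.card + 2 ≤ G.cliqueNum := by
      have := SimpleGraph.IsClique.card_le_cliqueNum (G := G) (t := insert v (insert y S)) (tc := hclique)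
      omega
    omega
  have step1 : T.card ≤ (G.cliqueNum - 2) * P.card := by
    calc T.card = ∑ p ∈ P, (T.filter (fun t => t.2 = p)).card := hcardT
    _ ≤ ∑ _p ∈ P, (G.cliqueNum - 2) := Finset.sum_le_sum hfib
    _ = (G.cliqueNum - 2) * P.card := by rw [Finset.sum_const, smul_eq_mul, mul_comm]
  -- count P fiberwise over the first coordinate
  have hmem2 : ∀ p ∈ P, p.1 ∈ (Finset.univ : Finset V) := fun p _ => Finset.mem_univ _
  have hcardP : P.card = ∑ v : V, (P.filter (fun p => p.1 = v)).card :=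
    Finset.card_eq_sum_card_fiberwise hmem2
  -- each fiber is the set of increasing pairs of out-neighbours
  have hfib2 : ∀ v : V, 2 * (P.filter (fun p => p.1 = v)).card
      = (N v).card * ((N v).card - 1) := by
    intro v
    have hQ : (P.filter (fun p => p.1 = v)).card
        = ((N v).offDiag.filter (fun q => q.1 < q.2)).card := by
      apply Finset.card_bij (fun p _ => p.2)
      · rintro ⟨v', y, w⟩ hp
        simp only [hP, Finset.mem_filter] at hp
        obtain ⟨⟨-, h1, h2, h3, h4⟩, rfl⟩ := hp
        simp only [Finset.mem_filter, Finset.mem_offDiag, hN, Finset.mem_filter,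
          Finset.mem_univ, true_and]
        exact ⟨⟨⟨h1, h3⟩, ⟨h1.trans h2, h4⟩, ne_of_lt h2⟩, h2⟩
      · rintro ⟨v1, q1⟩ h1 ⟨v2, q2⟩ h2 heq
        simp only [Finset.mem_filter] at h1 h2
        exact Prod.ext (h1.2.trans h2.2.symm) heq
      · rintro ⟨y, w⟩ hq
        simp only [Finset.mem_filter, Finset.mem_offDiag, hN, Finset.mem_filter,
          Finset.mem_univ, true_and] at hq
        obtain ⟨⟨⟨hy1, hy2⟩, ⟨hw1, hw2⟩, -⟩, hyw⟩ := hq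
        refine ⟨(v, y, w), ?_, rfl⟩
        simp only [hP, Finset.mem_filter, Finset.mem_univ, true_and]
        exact ⟨⟨hy1, hyw, hy2, hw2⟩, trivial⟩
    have hswap : ((N v).offDiag.filter (fun q => ¬ q.1 < q.2)).card
        = ((N v).offDiag.filter (fun q => q.1 < q.2)).card := by
      apply Finset.card_bij (fun q _ => (q.2, q.1))
      · rintro ⟨a, b⟩ hq
        simp only [Finset.mem_filter, Finset.mem_offDiag] at hq ⊢
        obtain ⟨⟨ha, hb, hne⟩, hnlt⟩ := hq
        exact ⟨⟨hb, ha, (Ne.symm hne)⟩, lt_of_le_of_ne (not_lt.1 hnlt) (Ne.symm hne)⟩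
      · rintro ⟨a1, b1⟩ - ⟨a2, b2⟩ - heq
        simp only [Prod.mk.injEq] at heq
        exact Prod.ext heq.2 heq.1
      · rintro ⟨a, b⟩ hq
        simp only [Finset.mem_filter, Finset.mem_offDiag] at hq
        obtain ⟨⟨ha, hb, hne⟩, hlt⟩ := hq
        refine ⟨(b, a), ?_, rfl⟩
        simp only [Finset.mem_filter, Finset.mem_offDiag]
        exact ⟨⟨hb, ha, Ne.symm hne⟩, not_lt.2 hlt.le⟩
    have hsplit := Finset.card_filter_add_card_filter_not
      (s := (N v).offDiag) (p := fun q => q.1 < q.2)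
    have hoff : (N v).offDiag.card = (N v).card * ((N v).card - 1) := by
      rw [Finset.offDiag_card]
      cases (N v).card <;> simp [Nat.mul_sub_one, Nat.mul_succ]
    rw [hQ]
    omega
  -- combine
  have step2 : 2 * P.card = ∑ v : V, (N v).card * ((N v).card - 1) := by
    rw [hcardP, Finset.mul_sum]
    exact Finset.sum_congr rfl fun v _ => hfib2 v
  calc 2 * T.card ≤ 2 * ((G.cliqueNum - 2) * P.card) := by omega
    _ = (G.cliqueNum - 2) * (2 * P.card) := by ring
    _ = (G.cliqueNum - 2) * ∑ v : V, (N v).card * ((N v).card - 1) := by rw [step2]
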